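/- Let v₁, v₂ ∈ SVL[1,∞), α>0, θ ∈ [1,∞), and γ₁, γ₁', γ₂, γ₂' > 0 with δ := γ₂/γ₂' − γ₁/γ₁' > 0. Then there is C such that for all n ∈ ℕ, ∑_{0 ≤ s₂ < n/γ₂'} 2^{-s₂γ₂'δαθ} v₂(2^{s₂})^θ v₁(2^{(n−s₂γ₂')/γ₁'})^θ ≤ C v₁(2^{n/γ₁'})^θ. -/

import Mathlib

/-- `SVL[1,∞)`: positive measurable functions `v` on `[1,∞)` such that for every `ε > 0`,
`v(t) t^(-ε)` is almost decreasing and `v(t) (log₂ (2t))^ε` is increasing on `[1,∞)`. -/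
def SVL (v : ℝ → ℝ) : Prop :=
  Measurable v ∧ (∀ t ≥ (1:ℝ), 0 < v t) ∧
  (∀ ε > (0:ℝ), ∃ C > (0:ℝ), ∀ t u : ℝ, 1 ≤ u → u ≤ t →
    v t * t ^ (-ε) ≤ C * (v u * u ^ (-ε))) ∧
  (∀ ε > (0:ℝ), MonotoneOn (fun t => v t * (Real.logb 2 (2 * t)) ^ ε) (Set.Ici 1))

lemma one_add_le_two_mul_rpow {x : ℝ} (hx : 0 ≤ x) : 1 + x ≤ 2 * (2:ℝ) ^ x := by
  have h1 : Real.log 2 * x + 1 ≤ (2:ℝ) ^ x := by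
    rw [Real.rpow_def_of_pos (by norm_num : (0:ℝ) < 2)]
    exact Real.add_one_le_exp _
  have h2 : (0.6931471803:ℝ) < Real.log 2 := Real.log_two_gt_d9
  nlinarith

set_option maxHeartbeats 1000000 in
/-- (Case `δ > 0`.) For `v₁, v₂ ∈ SVL`, `α > 0`, `θ ∈ [1,∞)`, `γⱼ, γⱼ' > 0` with
`δ := γ₂/γ₂' − γ₁/γ₁' > 0`, there is `C` such that for all `n`,
`∑_{0 ≤ s₂ < n/γ₂'} 2^{-s₂γ₂'δαθ} v₂(2^{s₂})^θ v₁(2^{(n−s₂γ₂')/γ₁'})^θ ≤ C v₁(2^{n/γ₁'})^θ`. -/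
theorem stmt6 (v₁ v₂ : ℝ → ℝ) (h₁ : SVL v₁) (h₂ : SVL v₂)
    (α θ γ₁ γ₁' γ₂ γ₂' : ℝ) (hα : 0 < α) (hθ : 1 ≤ θ)
    (hγ₁ : 0 < γ₁) (hγ₁' : 0 < γ₁') (hγ₂ : 0 < γ₂) (hγ₂' : 0 < γ₂')
    (hδ : 0 < γ₂ / γ₂' - γ₁ / γ₁') :
    ∃ C > (0:ℝ), ∀ n : ℕ,
      ∑ s₂ ∈ Finset.range ⌈(n:ℝ) / γ₂'⌉₊,
          (2:ℝ) ^ (-(s₂:ℝ) * γ₂' * (γ₂ / γ₂' - γ₁ / γ₁') * α * θ)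
            * (v₂ ((2:ℝ) ^ (s₂:ℝ))) ^ θ
            * (v₁ ((2:ℝ) ^ (((n:ℝ) - s₂ * γ₂') / γ₁'))) ^ θ
        ≤ C * (v₁ ((2:ℝ) ^ ((n:ℝ) / γ₁'))) ^ θ := by
  obtain ⟨-, hv₁pos, -, hMono₁⟩ := h₁
  obtain ⟨-, hv₂pos, hAD₂, -⟩ := h₂
  have hθ0 : (0:ℝ) < θ := lt_of_lt_of_le one_pos hθ
  set δ := γ₂ / γ₂' - γ₁ / γ₁' with hδdef
  set c := γ₂' * δ * α * θ with hc
  have hc0 : 0 < c := by positivity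
  have hq0 : (0:ℝ) < 1 + γ₂' / γ₁' := by positivity
  set ε := c / (2 * θ * (1 + γ₂' / γ₁')) with hεdef
  have hε0 : 0 < ε := by positivity
  have hhalf : ε * θ * (1 + γ₂' / γ₁') = c / 2 := by
    rw [hεdef]; field_simp
  obtain ⟨C₂, hC₂0, hC₂⟩ := hAD₂ ε hε0
  have hMono := hMono₁ ε hε0
  have hv₂1 : 0 < v₂ 1 := hv₂pos 1 le_rfl
  set K := (C₂ * v₂ 1) ^ θ * (2:ℝ) ^ (ε * θ) with hK
  have hK0 : 0 < K := by positivity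
  set r := (2:ℝ) ^ (-(c/2)) with hr
  have hr0 : 0 < r := by positivity
  have hr1 : r < 1 := by
    rw [hr]; exact Real.rpow_lt_one_of_one_lt_of_neg one_lt_two (by linarith)
  have hr1' : 0 < 1 - r := by linarith
  clear_value δ c ε K r
  refine ⟨K * (1 - r)⁻¹, mul_pos hK0 (inv_pos.mpr hr1'), fun n => ?_⟩
  set A := (n:ℝ) / γ₁' with hA
  have hA0 : 0 ≤ A := by positivity
  set t := (2:ℝ) ^ A with ht
  have ht1 : 1 ≤ t := Real.one_le_rpow one_le_two hA0
  have hv₁t : 0 < v₁ t := hv₁pos t ht1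
  clear_value A t
  have key : ∀ s₂ ∈ Finset.range ⌈(n:ℝ) / γ₂'⌉₊,
      (2:ℝ) ^ (-(s₂:ℝ) * γ₂' * δ * α * θ)
            * (v₂ ((2:ℝ) ^ (s₂:ℝ))) ^ θ
            * (v₁ ((2:ℝ) ^ (((n:ℝ) - s₂ * γ₂') / γ₁'))) ^ θ
        ≤ (K * (v₁ t) ^ θ) * r ^ s₂ := by
    intro s₂ hs₂
    have hs : (s₂:ℝ) < (n:ℝ) / γ₂' := Nat.lt_ceil.mp (Finset.mem_range.mp hs₂)
    set b := (s₂:ℝ) * γ₂' with hb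
    have hb0 : 0 ≤ b := by positivity
    have hbn : b < (n:ℝ) := by
      rw [hb]
      calc (s₂:ℝ) * γ₂' < ((n:ℝ) / γ₂') * γ₂' := mul_lt_mul_of_pos_right hs hγ₂'
        _ = (n:ℝ) := by field_simp
    set B := ((n:ℝ) - b) / γ₁' with hB
    have hB0 : 0 < B := div_pos (by linarith) hγ₁'
    have hBA : B ≤ A := by
      rw [hB, hA]
      exact (div_le_div_iff_of_pos_right hγ₁').mpr (by linarith)
    set u := (2:ℝ) ^ B with hu
    have hu1 : 1 ≤ u := Real.one_le_rpow one_le_two hB0.le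
    have hut : u ≤ t := by
      rw [hu, ht]; exact Real.rpow_le_rpow_of_exponent_le one_le_two hBA
    have hv₁u : 0 < v₁ u := hv₁pos u hu1
    clear_value b B u
    -- v₂ bound
    have hx1 : 1 ≤ (2:ℝ) ^ (s₂:ℝ) := Real.one_le_rpow one_le_two (by positivity)
    have hv₂x : 0 < v₂ ((2:ℝ) ^ (s₂:ℝ)) := hv₂pos _ hx1
    have hv2bound : v₂ ((2:ℝ) ^ (s₂:ℝ)) ≤ C₂ * v₂ 1 * (2:ℝ) ^ ((s₂:ℝ) * ε) := by
      have h := hC₂ ((2:ℝ) ^ (s₂:ℝ)) 1 le_rfl hx1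
      rw [Real.one_rpow, mul_one] at h
      have hxε : ((2:ℝ) ^ (s₂:ℝ)) ^ (-ε) = (2:ℝ) ^ (-((s₂:ℝ) * ε)) := by
        rw [← Real.rpow_mul (by norm_num : (0:ℝ) ≤ 2)]; congr 1; ring
      rw [hxε] at h
      calc v₂ ((2:ℝ) ^ (s₂:ℝ))
          = (v₂ ((2:ℝ) ^ (s₂:ℝ)) * (2:ℝ) ^ (-((s₂:ℝ) * ε))) * (2:ℝ) ^ ((s₂:ℝ) * ε) := by
            rw [mul_assoc, ← Real.rpow_add (by norm_num : (0:ℝ) < 2)]; simp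
        _ ≤ (C₂ * v₂ 1) * (2:ℝ) ^ ((s₂:ℝ) * ε) :=
            mul_le_mul_of_nonneg_right h (by positivity)
    -- v₁ bound
    have h2u : (2:ℝ) * u = (2:ℝ) ^ (1 + B) := by
      rw [hu, Real.rpow_add (by norm_num : (0:ℝ) < 2), Real.rpow_one]
    have h2t : (2:ℝ) * t = (2:ℝ) ^ (1 + A) := by
      rw [ht, Real.rpow_add (by norm_num : (0:ℝ) < 2), Real.rpow_one]
    have hlogu : Real.logb 2 (2 * u) = 1 + B := by
      rw [h2u, Real.logb_rpow (by norm_num) (by norm_num)]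
    have hlogt : Real.logb 2 (2 * t) = 1 + A := by
      rw [h2t, Real.logb_rpow (by norm_num) (by norm_num)]
    have hmono := hMono (Set.mem_Ici.mpr hu1) (Set.mem_Ici.mpr ht1) hut
    simp only [hlogu, hlogt] at hmono
    -- hmono : v₁ u * (1+B)^ε ≤ v₁ t * (1+A)^ε
    have h1B : (0:ℝ) < 1 + B := by linarith
    have h1A : (0:ℝ) < 1 + A := by linarith [hBA]
    have hratio : (1 + A) / (1 + B) ≤ 2 * (2:ℝ) ^ (b / γ₁') := by
      have hAB : A = B + b / γ₁' := by rw [hA, hB]; ring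
      have hstep : (1 + A) / (1 + B) ≤ 1 + b / γ₁' := by
        rw [div_le_iff₀ h1B]
        have hbγ : 0 ≤ b / γ₁' := by positivity
        have hprod : 0 ≤ B * (b / γ₁') := mul_nonneg hB0.le hbγ
        have hring : (1 + b / γ₁') * (1 + B) = 1 + (B + b / γ₁') + B * (b / γ₁') := by
          ring
        rw [hAB, hring]
        linarith
      exact hstep.trans (one_add_le_two_mul_rpow (by positivity))
    have hv1bound : v₁ u ≤ v₁ t * ((2:ℝ) ^ ε * (2:ℝ) ^ ((b / γ₁') * ε)) := by
      have hBpow : (0:ℝ) < (1 + B) ^ ε := Real.rpow_pos_of_pos h1B ε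
      have h1 : v₁ u ≤ v₁ t * ((1 + A) / (1 + B)) ^ ε := by
        rw [Real.div_rpow h1A.le h1B.le]
        rw [← mul_div_assoc, le_div_iff₀ hBpow]
        exact hmono
      refine h1.trans ?_
      apply mul_le_mul_of_nonneg_left _ hv₁t.le
      calc ((1 + A) / (1 + B)) ^ ε ≤ (2 * (2:ℝ) ^ (b / γ₁')) ^ ε :=
            Real.rpow_le_rpow (by positivity) hratio hε0.le
        _ = (2:ℝ) ^ ε * (2:ℝ) ^ ((b / γ₁') * ε) := by
            rw [Real.mul_rpow (by norm_num) (by positivity),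
              ← Real.rpow_mul (by norm_num : (0:ℝ) ≤ 2)]
    -- combine
    have hexp : -(s₂:ℝ) * γ₂' * δ * α * θ = -((s₂:ℝ) * c) := by rw [hc]; ring
    have hpow2 : ((2:ℝ) ^ ((s₂:ℝ) * ε)) ^ θ = (2:ℝ) ^ ((s₂:ℝ) * ε * θ) := by
      rw [← Real.rpow_mul (by norm_num : (0:ℝ) ≤ 2)]
    have hpowv2 : (v₂ ((2:ℝ) ^ (s₂:ℝ))) ^ θ
        ≤ (C₂ * v₂ 1) ^ θ * (2:ℝ) ^ ((s₂:ℝ) * ε * θ) := by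
      calc (v₂ ((2:ℝ) ^ (s₂:ℝ))) ^ θ
          ≤ (C₂ * v₂ 1 * (2:ℝ) ^ ((s₂:ℝ) * ε)) ^ θ :=
            Real.rpow_le_rpow hv₂x.le hv2bound hθ0.le
        _ = (C₂ * v₂ 1) ^ θ * (2:ℝ) ^ ((s₂:ℝ) * ε * θ) := by
            rw [Real.mul_rpow (by positivity) (by positivity), hpow2]
    have hpowv1 : (v₁ u) ^ θ
        ≤ (v₁ t) ^ θ * ((2:ℝ) ^ (ε * θ) * (2:ℝ) ^ ((b / γ₁') * ε * θ)) := by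
      calc (v₁ u) ^ θ
          ≤ (v₁ t * ((2:ℝ) ^ ε * (2:ℝ) ^ ((b / γ₁') * ε))) ^ θ :=
            Real.rpow_le_rpow hv₁u.le hv1bound hθ0.le
        _ = (v₁ t) ^ θ * ((2:ℝ) ^ (ε * θ) * (2:ℝ) ^ ((b / γ₁') * ε * θ)) := by
            rw [Real.mul_rpow (by positivity) (by positivity),
              Real.mul_rpow (by positivity) (by positivity),
              ← Real.rpow_mul (by norm_num : (0:ℝ) ≤ 2),
              ← Real.rpow_mul (by norm_num : (0:ℝ) ≤ 2)]
    have hrs : r ^ s₂ = (2:ℝ) ^ (-(c/2) * (s₂:ℝ)) := by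
      rw [hr, ← Real.rpow_natCast ((2:ℝ) ^ (-(c/2))) s₂,
        ← Real.rpow_mul (by norm_num : (0:ℝ) ≤ 2)]
    show (2:ℝ) ^ (-(s₂:ℝ) * γ₂' * δ * α * θ)
            * (v₂ ((2:ℝ) ^ (s₂:ℝ))) ^ θ * (v₁ u) ^ θ ≤ (K * (v₁ t) ^ θ) * r ^ s₂
    calc (2:ℝ) ^ (-(s₂:ℝ) * γ₂' * δ * α * θ)
            * (v₂ ((2:ℝ) ^ (s₂:ℝ))) ^ θ
            * (v₁ u) ^ θ
        ≤ (2:ℝ) ^ (-((s₂:ℝ) * c))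
            * ((C₂ * v₂ 1) ^ θ * (2:ℝ) ^ ((s₂:ℝ) * ε * θ))
            * ((v₁ t) ^ θ * ((2:ℝ) ^ (ε * θ) * (2:ℝ) ^ ((b / γ₁') * ε * θ))) := by
          rw [hexp]
          have h1 : (0:ℝ) ≤ (2:ℝ) ^ (-((s₂:ℝ) * c)) := by positivity
          apply mul_le_mul ?_ hpowv1 (by positivity) (by positivity)
          exact mul_le_mul_of_nonneg_left hpowv2 h1
      _ = (K * (v₁ t) ^ θ) *
            ((2:ℝ) ^ (-((s₂:ℝ) * c)) * (2:ℝ) ^ ((s₂:ℝ) * ε * θ)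
              * (2:ℝ) ^ ((b / γ₁') * ε * θ)) := by rw [hK]; ring
      _ = (K * (v₁ t) ^ θ) * r ^ s₂ := by
          rw [hrs, ← Real.rpow_add (by norm_num : (0:ℝ) < 2),
            ← Real.rpow_add (by norm_num : (0:ℝ) < 2)]
          rw [hb]
          have hE : -((s₂:ℝ) * c) + (s₂:ℝ) * ε * θ + (s₂:ℝ) * γ₂' / γ₁' * ε * θ
              = -(c/2) * (s₂:ℝ) := by linear_combination (s₂:ℝ) * hhalf
          rw [hE]
  have hgeom : ∑ s₂ ∈ Finset.range ⌈(n:ℝ) / γ₂'⌉₊, r ^ s₂ ≤ (1 - r)⁻¹ := by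
    rw [← tsum_geometric_of_lt_one hr0.le hr1]
    exact Summable.sum_le_tsum _ (fun i _ => by positivity)
      (summable_geometric_of_lt_one hr0.le hr1)
  calc ∑ s₂ ∈ Finset.range ⌈(n:ℝ) / γ₂'⌉₊,
          (2:ℝ) ^ (-(s₂:ℝ) * γ₂' * δ * α * θ)
            * (v₂ ((2:ℝ) ^ (s₂:ℝ))) ^ θ
            * (v₁ ((2:ℝ) ^ (((n:ℝ) - s₂ * γ₂') / γ₁'))) ^ θ
      ≤ ∑ s₂ ∈ Finset.range ⌈(n:ℝ) / γ₂'⌉₊, (K * (v₁ t) ^ θ) * r ^ s₂ :=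
        Finset.sum_le_sum key
    _ = (K * (v₁ t) ^ θ) * ∑ s₂ ∈ Finset.range ⌈(n:ℝ) / γ₂'⌉₊, r ^ s₂ := by
        rw [Finset.mul_sum]
    _ ≤ (K * (v₁ t) ^ θ) * (1 - r)⁻¹ :=
        mul_le_mul_of_nonneg_left hgeom (by positivity)
    _ = K * (1 - r)⁻¹ * (v₁ t) ^ θ := by ring
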